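/- Let F be a field. Then S_3(F) = { (a_{ij}) in T_3(F) : a_{11} = a_{22} } is a maximal subring of T_3(F): any subring of T_3(F) strictly containing S_3(F) equals T_3(F). -/

import Mathlib

/-- A ring is *i-reversible* if whenever `a * b` is a non-zero idempotent, `b * a` is an
idempotent. -/
def IsIReversible (S : Type*) [Ring S] : Prop :=
  ∀ a b : S, IsIdempotentElem (a * b) → a * b ≠ 0 → IsIdempotentElem (b * a)

/-- A ring is *reversible* if `a * b = 0` implies `b * a = 0`. -/
def IsReversible (S : Type*) [Ring S] : Prop :=
  ∀ a b : S, a * b = 0 → b * a = 0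

/-- A ring has only trivial idempotents if its only idempotents are `0` and `1`. -/
def HasOnlyTrivialIdempotents (S : Type*) [Ring S] : Prop :=
  ∀ e : S, IsIdempotentElem e → e = 0 ∨ e = 1

/-- Upper triangular predicate for square matrices. -/
def Matrix.IsUpperTri {n : ℕ} {R : Type*} [Zero R] (A : Matrix (Fin n) (Fin n) R) : Prop :=
  ∀ ⦃i j : Fin n⦄, j < i → A i j = 0

lemma Matrix.IsUpperTri.mul {n : ℕ} {R : Type*} [Ring R]
    {A B : Matrix (Fin n) (Fin n) R} (hA : A.IsUpperTri) (hB : B.IsUpperTri) :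
    (A * B).IsUpperTri := by
  intro i j h
  rw [Matrix.mul_apply]
  refine Finset.sum_eq_zero fun k _ => ?_
  rcases lt_or_ge k i with hk | hk
  · rw [hA hk, zero_mul]
  · rw [hB (lt_of_lt_of_le h hk), mul_zero]

/-- The ring `T_n(R)` of upper triangular `n × n` matrices, as a subring of the matrix ring. -/
def triangularRing (n : ℕ) (R : Type*) [Ring R] :
    Subring (Matrix (Fin n) (Fin n) R) where
  carrier := {A | A.IsUpperTri}
  mul_mem' ha hb := ha.mul hb
  one_mem' := fun i j h => by simp [Matrix.one_apply, (ne_of_lt h).symm]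
  add_mem' ha hb := fun i j h => by simp [Matrix.add_apply, ha h, hb h]
  zero_mem' := fun i j h => rfl
  neg_mem' ha := fun i j h => by simp [ha h]

lemma diag_mul_upperTri {n : ℕ} {R : Type*} [Ring R]
    {A B : Matrix (Fin n) (Fin n) R} (hA : A.IsUpperTri)
    (hB : B.IsUpperTri) (i : Fin n) : (A * B) i i = A i i * B i i := by
  rw [Matrix.mul_apply]
  refine Finset.sum_eq_single i (fun k _ hk => ?_) (by simp)
  rcases lt_or_gt_of_ne hk with h | h
  · rw [hA h, zero_mul]
  · rw [hB h, mul_zero]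

/-- The ring `D_n(R)` of upper triangular `n × n` matrices with constant diagonal. -/
def constDiagRing (n : ℕ) (R : Type*) [Ring R] :
    Subring (Matrix (Fin n) (Fin n) R) where
  carrier := {A | A.IsUpperTri ∧ ∀ i j : Fin n, A i i = A j j}
  mul_mem' := by
    rintro A B ⟨hA, hA'⟩ ⟨hB, hB'⟩
    refine ⟨hA.mul hB, fun i j => ?_⟩
    rw [diag_mul_upperTri hA hB, diag_mul_upperTri hA hB, hA' i j, hB' i j]
  one_mem' := ⟨fun i j h => by simp [Matrix.one_apply, (ne_of_lt h).symm], by simp⟩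
  add_mem' := by
    rintro A B ⟨hA, hA'⟩ ⟨hB, hB'⟩
    exact ⟨fun i j h => by simp [Matrix.add_apply, hA h, hB h],
      fun i j => by simp [Matrix.add_apply, hA' i j, hB' i j]⟩
  zero_mem' := ⟨fun i j h => rfl, by simp⟩
  neg_mem' := by
    rintro A ⟨hA, hA'⟩
    exact ⟨fun i j h => by simp [hA h], fun i j => by simp [hA' i j]⟩

/-- The ring `S_3(F)` of upper triangular `3 × 3` matrices with equal `(1,1)` and `(2,2)`
entries. -/
def S3Ring (F : Type*) [Ring F] : Subring (Matrix (Fin 3) (Fin 3) F) where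
  carrier := {A | A.IsUpperTri ∧ A 0 0 = A 1 1}
  mul_mem' := by
    rintro A B ⟨hA, hA'⟩ ⟨hB, hB'⟩
    refine ⟨hA.mul hB, ?_⟩
    rw [diag_mul_upperTri hA hB, diag_mul_upperTri hA hB, hA', hB']
  one_mem' := ⟨fun i j h => by simp [Matrix.one_apply, (ne_of_lt h).symm], by simp⟩
  add_mem' := by
    rintro A B ⟨hA, hA'⟩ ⟨hB, hB'⟩
    exact ⟨fun i j h => by simp [Matrix.add_apply, hA h, hB h],
      by simp [Matrix.add_apply, hA', hB']⟩
  zero_mem' := ⟨fun i j h => rfl, rfl⟩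
  neg_mem' := by
    rintro A ⟨hA, hA'⟩
    exact ⟨fun i j h => by simp [hA h], by simp [hA']⟩

/-- For a field `F`, `S_3(F)` is a maximal subring of `T_3(F)`: any subring of `T_3(F)`
strictly containing it equals `T_3(F)`. -/
theorem S3Ring_maximal_subring (F : Type*) [Field F]
    (S : Subring (Matrix (Fin 3) (Fin 3) F)) (hST : S ≤ triangularRing 3 F)
    (hS : S3Ring F < S) : S = triangularRing 3 F := by
  -- membership characterizations
  have memS3 : ∀ A : Matrix (Fin 3) (Fin 3) F,
      A ∈ S3Ring F ↔ A.IsUpperTri ∧ A 0 0 = A 1 1 := fun A => Iff.rfl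
  have memT : ∀ A : Matrix (Fin 3) (Fin 3) F,
      A ∈ triangularRing 3 F ↔ A.IsUpperTri := fun A => Iff.rfl
  have hE00tri : ∀ c : F, (Matrix.single (0 : Fin 3) 0 c).IsUpperTri := by
    intro c i j h
    apply Matrix.single_apply_of_ne
    intro ⟨hi, hj⟩
    rw [← hi, ← hj] at h
    exact lt_irrefl _ h
  -- scalar matrices are in S3, hence in S
  have hscal : ∀ c : F, (c • (1 : Matrix (Fin 3) (Fin 3) F)) ∈ S := by
    intro c
    refine hS.le ((memS3 _).2 ⟨fun i j h => ?_, by simp⟩)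
    simp [Matrix.one_apply, (ne_of_lt h).symm]
  -- S is closed under scalar multiplication
  have hsmul : ∀ (c : F) (A : Matrix (Fin 3) (Fin 3) F), A ∈ S → c • A ∈ S := by
    intro c A hA
    have := S.mul_mem (hscal c) hA
    rwa [smul_mul_assoc, one_mul] at this
  -- get a witness B ∈ S \ S3
  obtain ⟨B, hBS, hBnS3⟩ := SetLike.exists_of_lt hS
  have hBtri : B.IsUpperTri := (memT B).1 (hST hBS)
  have hBne : B 0 0 - B 1 1 ≠ 0 := by
    intro h
    exact hBnS3 ((memS3 B).2 ⟨hBtri, by linear_combination h⟩)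
  set d : F := B 0 0 - B 1 1 with hd
  -- d • E00 ∈ S
  have hM : B - d • Matrix.single 0 0 (1 : F) ∈ S3Ring F := by
    refine (memS3 _).2 ⟨fun i j h => ?_, ?_⟩
    · simp [Matrix.sub_apply, hBtri h, hE00tri _ h]
    · simp [Matrix.sub_apply, Matrix.single_apply_same,
        Matrix.single_apply_of_ne (i := 0) (j := 0) (c := (1:F)) (i' := 1) (j' := 1) (by simp)]
      ring
  have hdE : d • Matrix.single 0 0 (1 : F) ∈ S := by
    have := S.sub_mem hBS (hS.le hM)
    simpa using this
  have hE : Matrix.single (0 : Fin 3) 0 (1 : F) ∈ S := by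
    have := hsmul d⁻¹ _ hdE
    rwa [smul_smul, inv_mul_cancel₀ hBne, one_smul] at this
  -- conclude
  refine le_antisymm hST fun A hA => ?_
  have hAtri : A.IsUpperTri := (memT A).1 hA
  have h1 : A - (A 0 0 - A 1 1) • Matrix.single 0 0 (1 : F) ∈ S := by
    refine hS.le ((memS3 _).2 ⟨fun i j h => ?_, ?_⟩)
    · simp [Matrix.sub_apply, hAtri h, hE00tri _ h]
    · simp [Matrix.sub_apply, Matrix.single_apply_same,
        Matrix.single_apply_of_ne (i := 0) (j := 0) (c := (1:F)) (i' := 1) (j' := 1) (by simp)]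
      try ring
  have := S.add_mem h1 (hsmul (A 0 0 - A 1 1) _ hE)
  simpa using this
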